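/- Let S be a set of 8 points in PG(4,ℝ) such that every 4 points of S span a hyperplane and S spans the whole space. Then S spans at least 25 ordinary hyperplanes, i.e., e_4(8) ≥ 25. -/

import Mathlib

open Module Finset

namespace Stmt15Aux

noncomputable section
open scoped Classical

abbrev Pt := Projectivization ℝ (Fin 5 → ℝ)

/-- span of a finite set of projective points -/
def sp (T : Finset Pt) : Submodule ℝ (Fin 5 → ℝ) := ⨆ p ∈ T, Projectivization.submodule p

/-- points of `S` lying in `H` -/
def pts (S : Finset Pt) (H : Submodule ℝ (Fin 5 → ℝ)) : Finset Pt :=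
  S.filter (fun p => p.submodule ≤ H)

lemma pts_subset (S : Finset Pt) (H : Submodule ℝ (Fin 5 → ℝ)) : pts S H ⊆ S :=
  filter_subset _ _

lemma mem_pts {S : Finset Pt} {H : Submodule ℝ (Fin 5 → ℝ)} {p : Pt} :
    p ∈ pts S H ↔ p ∈ S ∧ p.submodule ≤ H := mem_filter

lemma sp_le {T : Finset Pt} {H : Submodule ℝ (Fin 5 → ℝ)}
    (h : ∀ p ∈ T, Projectivization.submodule p ≤ H) : sp T ≤ H :=
  iSup_le fun p => iSup_le fun hp => h p hp

lemma le_sp {T : Finset Pt} {p : Pt} (hp : p ∈ T) : Projectivization.submodule p ≤ sp T :=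
  le_iSup_of_le p (le_iSup_of_le hp le_rfl)

variable {S : Finset Pt}

lemma sp_eq (hspan : ∀ T ⊆ S, T.card = 4 → finrank ℝ (sp T) = 4)
    {T : Finset Pt} {H : Submodule ℝ (Fin 5 → ℝ)}
    (hT : T ⊆ S) (hc : T.card = 4) (hH : finrank ℝ H = 4)
    (hle : ∀ p ∈ T, Projectivization.submodule p ≤ H) : sp T = H :=
  Submodule.eq_of_le_of_finrank_eq (sp_le hle) (by rw [hspan T hT hc, hH])

lemma sp_eq_of_subset_pts (hspan : ∀ T ⊆ S, T.card = 4 → finrank ℝ (sp T) = 4)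
    {T : Finset Pt} {H : Submodule ℝ (Fin 5 → ℝ)}
    (hH : finrank ℝ H = 4) (hT : T ⊆ pts S H) (hc : T.card = 4) : sp T = H :=
  sp_eq hspan (hT.trans (pts_subset S H)) hc hH (fun p hp => (mem_pts.mp (hT hp)).2)

/-- the finset of hyperplanes spanned by 4-subsets of `S` -/
def hyps (S : Finset Pt) : Finset (Submodule ℝ (Fin 5 → ℝ)) :=
  (S.powersetCard 4).image sp

lemma finrank_of_mem_hyps (hspan : ∀ T ⊆ S, T.card = 4 → finrank ℝ (sp T) = 4)
    {H : Submodule ℝ (Fin 5 → ℝ)} (hH : H ∈ hyps S) : finrank ℝ H = 4 := by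
  obtain ⟨T, hT, rfl⟩ := mem_image.mp hH
  rw [mem_powersetCard] at hT
  exact hspan T hT.1 hT.2

lemma four_le_card_pts {H : Submodule ℝ (Fin 5 → ℝ)} (hH : H ∈ hyps S) :
    4 ≤ (pts S H).card := by
  obtain ⟨T, hT, rfl⟩ := mem_image.mp hH
  rw [mem_powersetCard] at hT
  have : T ⊆ pts S (sp T) := fun p hp => mem_pts.mpr ⟨hT.1 hp, le_sp hp⟩
  calc 4 = T.card := hT.2.symm
    _ ≤ _ := card_le_card this

lemma card_pts_le_seven (hcard : S.card = 8)
    (hspan : ∀ T ⊆ S, T.card = 4 → finrank ℝ (sp T) = 4)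
    (htop : sp S = ⊤) {H : Submodule ℝ (Fin 5 → ℝ)} (hH : H ∈ hyps S) :
    (pts S H).card ≤ 7 := by
  by_contra h
  push_neg at h
  have h8 : (pts S H).card = 8 := le_antisymm (hcard ▸ card_le_card (pts_subset S H)) h
  have heq : pts S H = S := eq_of_subset_of_card_le (pts_subset S H) (by omega)
  have hle : sp S ≤ H := sp_le (fun p hp => (mem_pts.mp (heq ▸ hp)).2)
  rw [htop, top_le_iff] at hle
  have := finrank_of_mem_hyps hspan hH
  rw [hle] at this
  have h5 : finrank ℝ ((⊤ : Submodule ℝ (Fin 5 → ℝ))) = 5 := by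
    rw [finrank_top]; exact Module.finrank_fin_fun ℝ
  omega

/-- the fibers of `sp` over a hyperplane -/
lemma fiber_eq (hspan : ∀ T ⊆ S, T.card = 4 → finrank ℝ (sp T) = 4)
    {H : Submodule ℝ (Fin 5 → ℝ)} (hH : H ∈ hyps S) :
    (S.powersetCard 4).filter (fun T => sp T = H) = (pts S H).powersetCard 4 := by
  have hH4 := finrank_of_mem_hyps hspan hH
  ext T
  simp only [mem_filter, mem_powersetCard]
  constructor
  · rintro ⟨⟨hTS, hc⟩, rfl⟩
    exact ⟨fun p hp => mem_pts.mpr ⟨hTS hp, le_sp hp⟩, hc⟩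
  · rintro ⟨hT, hc⟩
    exact ⟨⟨hT.trans (pts_subset S H), hc⟩, sp_eq_of_subset_pts hspan hH4 hT hc⟩

/-- Equation (1): `∑_{H} C(n_H, 4) = 70`. -/
lemma eq1 (hcard : S.card = 8)
    (hspan : ∀ T ⊆ S, T.card = 4 → finrank ℝ (sp T) = 4) :
    ∑ H ∈ hyps S, ((pts S H).card.choose 4) = 70 := by
  have hmap : ∀ T ∈ S.powersetCard 4, sp T ∈ hyps S := fun T hT => mem_image_of_mem sp hT
  have h := Finset.card_eq_sum_card_fiberwise hmap
  rw [card_powersetCard, hcard] at h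
  have : ∀ H ∈ hyps S, ((S.powersetCard 4).filter (fun T => sp T = H)).card
      = (pts S H).card.choose 4 := by
    intro H hH
    rw [fiber_eq hspan hH, card_powersetCard]
  rw [Finset.sum_congr rfl this] at h
  exact h.symm

/-- Inequality (2): `∑_H C(n_H,5) (8 - n_H) ≤ 28`. -/
lemma ineq2 (hcard : S.card = 8)
    (hspan : ∀ T ⊆ S, T.card = 4 → finrank ℝ (sp T) = 4) :
    ∑ H ∈ hyps S, ((pts S H).card.choose 5) * (8 - (pts S H).card) ≤ 28 := by
  set P := (hyps S).sigma (fun H => ((pts S H).powersetCard 5) ×ˢ (S \ pts S H)) with hP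
  have hcardP : P.card = ∑ H ∈ hyps S, ((pts S H).card.choose 5) * (8 - (pts S H).card) := by
    rw [hP, card_sigma]
    refine Finset.sum_congr rfl (fun H hH => ?_)
    rw [card_product, card_powersetCard, card_sdiff_of_subset (pts_subset S H), hcard]
  -- the injection into 6-subsets of S
  have hinj : P.card ≤ (S.powersetCard 6).card := by
    apply Finset.card_le_card_of_injOn (fun x => insert x.2.2 x.2.1)
    · rintro ⟨H, A, x⟩ hx
      simp only [hP, mem_coe, mem_sigma, mem_product, mem_powersetCard, mem_sdiff] at hx
      obtain ⟨hH, ⟨hA, hA5⟩, hxS, hxH⟩ := hx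
      rw [mem_coe, mem_powersetCard]
      constructor
      · exact insert_subset hxS (hA.trans (pts_subset S H))
      · rw [card_insert_of_notMem (fun hxA => hxH (hA hxA)), hA5]
    · rintro ⟨H, A, x⟩ hx ⟨H', A', x'⟩ hx' heq
      simp only [hP, coe_sigma, Set.mem_sigma_iff, mem_coe, mem_product, mem_powersetCard,
        mem_sdiff] at hx hx'
      obtain ⟨hH, ⟨hA, hA5⟩, hxS, hxH⟩ := hx
      obtain ⟨hH', ⟨hA', hA'5⟩, hx'S, hx'H⟩ := hx'
      simp only at heq
      have hxA : x ∉ A := fun h => hxH (hA h)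
      have hx'A' : x' ∉ A' := fun h => hx'H (hA' h)
      -- |A ∩ A'| ≥ 4
      have hsub : A ∪ A' ⊆ insert x A := by
        apply union_subset (subset_insert x A)
        rw [heq]; exact subset_insert x' A'
      have hu : (A ∪ A').card ≤ 6 := by
        calc (A ∪ A').card ≤ (insert x A).card := card_le_card hsub
          _ = 6 := by rw [card_insert_of_notMem hxA, hA5]
      have hiu : 4 ≤ (A ∩ A').card := by
        have := Finset.card_union_add_card_inter A A'
        omega
      obtain ⟨T, hT, hT4⟩ := Finset.exists_subset_card_eq hiu
      have hHH' : H = H' := by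
        have h1 : sp T = H := sp_eq_of_subset_pts hspan (finrank_of_mem_hyps hspan hH)
          (hT.trans ((inter_subset_left).trans hA)) hT4
        have h2 : sp T = H' := sp_eq_of_subset_pts hspan (finrank_of_mem_hyps hspan hH')
          (hT.trans ((inter_subset_right).trans hA')) hT4
        rw [← h1, h2]
      subst hHH'
      have hxx' : x = x' := by
        have : x' ∈ insert x A := by rw [heq]; exact mem_insert_self x' A'
        rcases mem_insert.mp this with h | h
        · exact h.symm
        · exact absurd (hA h) hx'H
      subst hxx'
      have hAA' : A = A' := by
        have h1 : A = (insert x A).erase x := by rw [erase_insert hxA]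
        have h2 : A' = (insert x A').erase x := by rw [erase_insert hx'A']
        rw [h1, h2, heq]
      subst hAA'
      rfl
  rw [hcardP, card_powersetCard, hcard] at hinj
  exact hinj

/-- counting function: τ i is the number of hyperplanes containing exactly i points of S -/
def tau (S : Finset Pt) (i : ℕ) : ℕ := ((hyps S).filter (fun H => (pts S H).card = i)).card

lemma sum_split (hcard : S.card = 8)
    (hspan : ∀ T ⊆ S, T.card = 4 → finrank ℝ (sp T) = 4)
    (htop : sp S = ⊤) (F : ℕ → ℕ) :
    ∑ H ∈ hyps S, F ((pts S H).card)
      = F 4 * tau S 4 + F 5 * tau S 5 + F 6 * tau S 6 + F 7 * tau S 7 := by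
  have hmaps : ∀ H ∈ hyps S, (pts S H).card ∈ Finset.Icc 4 7 := fun H hH =>
    Finset.mem_Icc.mpr ⟨four_le_card_pts hH, card_pts_le_seven hcard hspan htop hH⟩
  have h := Finset.sum_fiberwise_of_maps_to hmaps (fun H => F ((pts S H).card))
  rw [← h]
  have hicc : Finset.Icc (4:ℕ) 7 = {4, 5, 6, 7} := by decide
  rw [hicc]
  have hterm : ∀ i : ℕ, ∑ H ∈ (hyps S).filter (fun H => (pts S H).card = i),
      F ((pts S H).card) = F i * tau S i := by
    intro i
    rw [Finset.sum_congr rfl (fun H hH => by rw [(mem_filter.mp hH).2]),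
      Finset.sum_const, tau, smul_eq_mul, mul_comm]
  simp only [Finset.sum_insert, Finset.mem_insert, Finset.mem_singleton,
    Finset.sum_singleton, hterm]
  norm_num [hterm]
  ring

end
end Stmt15Aux

open Stmt15Aux in
/-- Any set of 8 points of `PG(4,ℝ)`, every 4 of which span a hyperplane and spanning the
whole space, spans at least 25 ordinary hyperplanes: `e₄(8) ≥ 25`. -/
theorem stmt15
    (S : Finset (Projectivization ℝ (Fin 5 → ℝ))) (hcard : S.card = 8)
    (hspan : ∀ T ⊆ S, T.card = 4 →
      finrank ℝ ↥(⨆ p ∈ T, Projectivization.submodule p) = 4)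
    (htop : (⨆ p ∈ S, Projectivization.submodule p) = ⊤) :
    25 ≤ {H : Submodule ℝ (Fin 5 → ℝ) | finrank ℝ ↥H = 4 ∧
      {p ∈ (S : Set (Projectivization ℝ (Fin 5 → ℝ))) | p.submodule ≤ H}.ncard = 4}.ncard := by
  classical
  have hspan' : ∀ T ⊆ S, T.card = 4 → finrank ℝ (sp T) = 4 := hspan
  have htop' : sp S = ⊤ := htop
  -- identify the target set with the finset of ordinary hyperplanes
  have hptseq : ∀ H : Submodule ℝ (Fin 5 → ℝ),
      {p ∈ (S : Set (Projectivization ℝ (Fin 5 → ℝ))) | p.submodule ≤ H}.ncard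
        = (pts S H).card := by
    intro H
    have : {p ∈ (S : Set (Projectivization ℝ (Fin 5 → ℝ))) | p.submodule ≤ H}
        = ↑(pts S H) := by
      ext p; simp [mem_pts]
    rw [this, Set.ncard_coe_finset]
  have hset : {H : Submodule ℝ (Fin 5 → ℝ) | finrank ℝ ↥H = 4 ∧
      {p ∈ (S : Set (Projectivization ℝ (Fin 5 → ℝ))) | p.submodule ≤ H}.ncard = 4}
      = ↑((hyps S).filter (fun H => (pts S H).card = 4)) := by
    ext H
    simp only [Set.mem_setOf_eq, coe_filter, hptseq]
    constructor
    · rintro ⟨h4, hn⟩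
      refine ⟨?_, hn⟩
      have hsub : pts S H ⊆ S := pts_subset S H
      have : sp (pts S H) = H :=
        sp_eq_of_subset_pts hspan' h4 (Finset.Subset.refl _) hn
      exact this ▸ mem_image_of_mem sp (mem_powersetCard.mpr ⟨hsub, hn⟩)
    · rintro ⟨hH, hn⟩
      exact ⟨finrank_of_mem_hyps hspan' hH, hn⟩
  rw [hset, Set.ncard_coe_finset]
  show 25 ≤ tau S 4
  have h1 := eq1 hcard hspan'
  have h2 := ineq2 hcard hspan'
  rw [sum_split hcard hspan' htop' (fun n => n.choose 4)] at h1
  rw [sum_split hcard hspan' htop' (fun n => n.choose 5 * (8 - n))] at h2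
  norm_num [Nat.choose] at h1 h2
  omega
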